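/- arXiv:1501.04748 — 5 statements merged into one kernel-verified Lean document; each statement's English description precedes it below -/
import Mathlib

section
/- Computation Lemma: Let Γ = (C, A, Δ) be a normed BPA system and let α, α', α'' be processes. If α ⟹ α' ⟹ α'' and α ≃ α'' (branching bisimilar), then α' ≃ α. -/
open Relation

/-- A BPA system over constants `C` and actions `A`: a distinguished silent
action `tau`, and a finite set of transition rules `X —ℓ→ α`, where `C` and
`A` are finite. -/
structure BPA (C A : Type) where
  tau : A
  rules : Set (C × A × List C)
  finC : Finite C
  finA : Finite A
  finRules : rules.Finite

namespace BPA

variable {C A : Type}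

/-- One-step labelled transition between processes.  Processes are strings
over `C` (lists, with the leftmost constant acting first). -/
def Step (Γ : BPA C A) (ℓ : A) (p q : List C) : Prop :=
  ∃ X γ β, (X, ℓ, γ) ∈ Γ.rules ∧ p = X :: β ∧ q = γ ++ β

/-- A transition carrying an arbitrary label. -/
def AnyStep (Γ : BPA C A) (p q : List C) : Prop := ∃ ℓ, Γ.Step ℓ p q

/-- `⟹` : the reflexive transitive closure of silent steps. -/
def TauStar (Γ : BPA C A) : List C → List C → Prop := ReflTransGen (Γ.Step Γ.tau)

/-- A process is normed if it can reach the empty process `ε`. -/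
def NormedProc (Γ : BPA C A) (p : List C) : Prop := ReflTransGen Γ.AnyStep p []

/-- The BPA system is normed. -/
def Normed (Γ : BPA C A) : Prop := ∀ X : C, Γ.NormedProc [X]

/-- A chain of `s`-steps starting at `start` in which every visited state is
related by `r` to the process `anchor`. -/
def RelChain (s : List C → List C → Prop) (r : List C → List C → Prop)
    (anchor : List C) : List C → List C → Prop :=
  ReflTransGen fun x y => s x y ∧ r anchor y

/-- Branching bisimulation (an equivalence relation by convention). -/
def IsBranchingBisim (Γ : BPA C A) (r : List C → List C → Prop) : Prop :=
  Equivalence r ∧ ∀ α β, r α β →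
    ((∀ a, a ≠ Γ.tau → ∀ α', Γ.Step a α α' →
        ∃ β'' β', RelChain (Γ.Step Γ.tau) r β β β'' ∧ Γ.Step a β'' β' ∧ r α' β') ∧
     (∀ α', Γ.Step Γ.tau α α' → ¬ r α α' →
        ∃ β'' β', RelChain (Γ.Step Γ.tau) r β β β'' ∧ Γ.Step Γ.tau β'' β' ∧
          ¬ r β'' β' ∧ r α' β'))

/-- Branching bisimilarity `≃` : the largest branching bisimulation. -/
def Bisim (Γ : BPA C A) (α β : List C) : Prop :=
  ∃ r, Γ.IsBranchingBisim r ∧ r α β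

/-- A ground process: it can silently reach `ε`. -/
def Ground (Γ : BPA C A) (p : List C) : Prop := Γ.TauStar p []

/-- The set `C_G` of ground constants. -/
def GroundC (Γ : BPA C A) : Set C := {X | Γ.Ground [X]}

/-- `R`-equality `=_R`: the two processes differ only in suffixes over `R`. -/
def REq (R : Set C) (α β : List C) : Prop :=
  ∃ ζ a b, α = ζ ++ a ∧ β = ζ ++ b ∧ (∀ X ∈ a, X ∈ R) ∧ (∀ X ∈ b, X ∈ R)

open Classical in
/-- The `R`-normal form `α_R` of a process: delete the maximal suffix over `R`. -/
noncomputable def nf (R : Set C) (α : List C) : List C :=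
  (α.reverse.dropWhile fun X => decide (X ∈ R)).reverse

/-- A process is in `R`-normal form. -/
def InNF (R : Set C) (α : List C) : Prop := nf R α = α

/-- The `R`-transition relation `—ℓ→_R` between `R`-normal forms. -/
def StepR (Γ : BPA C A) (R : Set C) (ℓ : A) (ζ η : List C) : Prop :=
  ∃ α β, ζ = nf R α ∧ η = nf R β ∧ Γ.Step ℓ α β

/-- `⟹_R`. -/
def TauStarR (Γ : BPA C A) (R : Set C) : List C → List C → Prop :=
  ReflTransGen (Γ.StepR R Γ.tau)

/-- `R`-bisimulation: an equivalence relation containing `=_R` satisfying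
ground preservation and the relativized branching transfer conditions. -/
def IsRBisim (Γ : BPA C A) (R : Set C) (r : List C → List C → Prop) : Prop :=
  Equivalence r ∧ (∀ α β, REq R α β → r α β) ∧
  ∀ α β, r α β →
    ((Γ.TauStar α [] → Γ.TauStar β []) ∧
     (∀ α', Γ.Step Γ.tau α α' → ¬ r α α' →
        ∃ β'' β', RelChain (Γ.StepR R Γ.tau) r β (nf R β) β'' ∧
          Γ.StepR R Γ.tau β'' β' ∧ ¬ r β'' β' ∧ r α' β') ∧
     (∀ a, a ≠ Γ.tau → ∀ α', Γ.Step a α α' →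
        ∃ β'' β', RelChain (Γ.StepR R Γ.tau) r β (nf R β) β'' ∧
          Γ.StepR R a β'' β' ∧ r α' β'))

/-- `R`-bisimilarity `≃_R` : the largest `R`-bisimulation. -/
def RBisim (Γ : BPA C A) (R : Set C) (α β : List C) : Prop :=
  ∃ r, Γ.IsRBisim R r ∧ r α β

/-- `Id_R = {X ∈ C : X ≃_R ε}`. -/
def IdR (Γ : BPA C A) (R : Set C) : Set C := {X | Γ.RBisim R [X] []}

/-- `Rd_R(γ) = {X ∈ C : Xγ ≃_R γ}`. -/
def RdR (Γ : BPA C A) (R : Set C) (γ : List C) : Set C :=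
  {X | Γ.RBisim R (X :: γ) γ}

/-- An admissible reference set: `R = Id_R`. -/
def Admissible (Γ : BPA C A) (R : Set C) : Prop := R = Γ.IdR R

end BPA

/-- Simulation of a silent path by an `r0`-related process: the simulating
chain only visits states that are `r0`-related to states on the path. -/
lemma tau_sim {C A : Type} (Γ : BPA C A) (r0 : List C → List C → Prop)
    (hEq : Equivalence r0)
    (hTr : ∀ a b, r0 a b → ∀ a', Γ.Step Γ.tau a a' → ¬ r0 a a' →
        ∃ b'' b', BPA.RelChain (Γ.Step Γ.tau) r0 b b b'' ∧ Γ.Step Γ.tau b'' b' ∧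
          ¬ r0 b'' b' ∧ r0 a' b') :
    ∀ v v', Γ.TauStar v v' → ∀ u, r0 v u →
      ∃ u', Relation.ReflTransGen
          (fun p q => Γ.Step Γ.tau p q ∧ ∃ w, Γ.TauStar v w ∧ Γ.TauStar w v' ∧ r0 w q) u u'
        ∧ r0 v' u' := by
  intro v v' hvv'
  induction hvv' using Relation.ReflTransGen.head_induction_on with
  | refl => exact fun u hu => ⟨u, Relation.ReflTransGen.refl, hu⟩
  | head h' h ih =>
    rename_i a c
    intro u hu
    by_cases hc : r0 a c
    · obtain ⟨u', hch, hu'⟩ := ih u (hEq.trans (hEq.symm hc) hu)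
      refine ⟨u', (Relation.ReflTransGen.mono ?_ _ _ hch), hu'⟩
      rintro p q ⟨hs, w, hw1, hw2, hw3⟩
      exact ⟨hs, w, Relation.ReflTransGen.head h' hw1, hw2, hw3⟩
    · obtain ⟨u'', u1, hch1, hstep1, _, hcu1⟩ := hTr a u hu c h' hc
      obtain ⟨u', hch2, hv'u'⟩ := ih u1 hcu1
      have seg1 : Relation.ReflTransGen
          (fun p q => Γ.Step Γ.tau p q ∧ ∃ w, Γ.TauStar a w ∧ Γ.TauStar w v' ∧ r0 w q) u u'' := by
        refine (Relation.ReflTransGen.mono ?_ _ _ hch1)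
        rintro p q ⟨hs, hq⟩
        exact ⟨hs, a, Relation.ReflTransGen.refl, Relation.ReflTransGen.head h' h,
          hEq.trans hu hq⟩
      have seg2 : Relation.ReflTransGen
          (fun p q => Γ.Step Γ.tau p q ∧ ∃ w, Γ.TauStar a w ∧ Γ.TauStar w v' ∧ r0 w q) u u1 :=
        seg1.tail ⟨hstep1, c, Relation.ReflTransGen.single h', h, hcu1⟩
      have seg3 : Relation.ReflTransGen
          (fun p q => Γ.Step Γ.tau p q ∧ ∃ w, Γ.TauStar a w ∧ Γ.TauStar w v' ∧ r0 w q) u1 u' := by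
        refine (Relation.ReflTransGen.mono ?_ _ _ hch2)
        rintro p q ⟨hs, w, hw1, hw2, hw3⟩
        exact ⟨hs, w, Relation.ReflTransGen.head h' hw1, hw2, hw3⟩
      exact ⟨u', seg2.trans seg3, hv'u'⟩

/-- **Computation Lemma.**  In a normed BPA system, if `α ⟹ α' ⟹ α''` and
`α ≃ α''`, then `α' ≃ α`. -/
theorem computation_lemma {C A : Type} (Γ : BPA C A) (hΓ : Γ.Normed)
    (α α' α'' : List C) (h1 : Γ.TauStar α α') (h2 : Γ.TauStar α' α'')
    (h3 : Γ.Bisim α α'') : Γ.Bisim α' α := by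
  obtain ⟨r0, ⟨hEq, hTr⟩, hr0⟩ := h3
  have hTrVis : ∀ a b, r0 a b → ∀ ℓ, ℓ ≠ Γ.tau → ∀ a', Γ.Step ℓ a a' →
      ∃ b'' b', BPA.RelChain (Γ.Step Γ.tau) r0 b b b'' ∧ Γ.Step ℓ b'' b' ∧ r0 a' b' :=
    fun a b h => (hTr a b h).1
  have hTrTau : ∀ a b, r0 a b → ∀ a', Γ.Step Γ.tau a a' → ¬ r0 a a' →
      ∃ b'' b', BPA.RelChain (Γ.Step Γ.tau) r0 b b b'' ∧ Γ.Step Γ.tau b'' b' ∧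
        ¬ r0 b'' b' ∧ r0 a' b' := fun a b h => (hTr a b h).2
  -- The path predicate and the merged class
  set OnPath : List C → Prop := fun γ => Γ.TauStar α γ ∧ Γ.TauStar γ α'' with hOnPath
  set P : List C → Prop := fun z => ∃ γ, OnPath γ ∧ r0 z γ with hP
  set r : List C → List C → Prop := fun x y => r0 x y ∨ (P x ∧ P y) with hr
  have Pclosed : ∀ {a b : List C}, r0 a b → P b → P a := by
    rintro a b hab ⟨γ, hpg, hbg⟩
    exact ⟨γ, hpg, hEq.trans hab hbg⟩
  have Pclosed' : ∀ {a b : List C}, r0 a b → P a → P b :=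
    fun hab ha => Pclosed (hEq.symm hab) ha
  have hrEq : Equivalence r := by
    constructor
    · intro x; exact Or.inl (hEq.refl x)
    · rintro x y (h | ⟨hx, hy⟩)
      · exact Or.inl (hEq.symm h)
      · exact Or.inr ⟨hy, hx⟩
    · rintro x y z (hxy | ⟨hx, hy⟩) (hyz | ⟨hy', hz⟩)
      · exact Or.inl (hEq.trans hxy hyz)
      · exact Or.inr ⟨Pclosed hxy hy', hz⟩
      · exact Or.inr ⟨hx, Pclosed' hyz hy⟩
      · exact Or.inr ⟨hx, hz⟩
  -- routing: starting from any y in the class P, reach (silently, within P)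
  -- a process r0-related to any given path state γ.
  have route : ∀ γ, OnPath γ → ∀ y, P y →
      ∃ w, BPA.RelChain (Γ.Step Γ.tau) r y y w ∧ r0 γ w := by
    rintro γ ⟨hαγ, hγα''⟩ y ⟨δ, ⟨hαδ, hδα''⟩, hyδ⟩
    have Py : P y := ⟨δ, ⟨hαδ, hδα''⟩, hyδ⟩
    obtain ⟨w1, c1, hw1⟩ := tau_sim Γ r0 hEq hTrTau δ α'' hδα'' y (hEq.symm hyδ)
    have hαw1 : r0 α w1 := hEq.trans hr0 hw1
    obtain ⟨w, c2, hw⟩ := tau_sim Γ r0 hEq hTrTau α γ hαγ w1 hαw1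
    refine ⟨w, Relation.ReflTransGen.trans ((Relation.ReflTransGen.mono ?_ _ _ c1)) ((Relation.ReflTransGen.mono ?_ _ _ c2)), hw⟩
    · rintro p q ⟨hs, x, hx1, hx2, hx3⟩
      exact ⟨hs, Or.inr ⟨Py, ⟨x, ⟨hαδ.trans hx1, hx2⟩, hEq.symm hx3⟩⟩⟩
    · rintro p q ⟨hs, x, hx1, hx2, hx3⟩
      exact ⟨hs, Or.inr ⟨Py, ⟨x, ⟨hx1, hx2.trans hγα''⟩, hEq.symm hx3⟩⟩⟩
  refine ⟨r, ⟨hrEq, ?_⟩, Or.inr ⟨⟨α', ⟨h1, h2⟩, hEq.refl α'⟩,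
    ⟨α, ⟨Relation.ReflTransGen.refl, h1.trans h2⟩, hEq.refl α⟩⟩⟩
  rintro x y hxy
  by_cases hPx : P x
  · -- x is in the merged class; then so is y
    have hPy : P y := by
      rcases hxy with h | ⟨_, hy⟩
      · exact Pclosed' h hPx
      · exact hy
    obtain ⟨γ, hγpath, hxγ⟩ := hPx
    have hPx : P x := ⟨γ, hγpath, hxγ⟩
    obtain ⟨w, cyw, hγw⟩ := route γ hγpath y hPy
    have hxw : r0 x w := hEq.trans hxγ hγw
    have hPw : P w := ⟨γ, hγpath, hEq.symm hγw⟩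
    constructor
    · intro a ha x' hstep
      obtain ⟨w'', w', c3, hs3, hx'w'⟩ := hTrVis x w hxw a ha x' hstep
      refine ⟨w'', w', Relation.ReflTransGen.trans cyw ((Relation.ReflTransGen.mono ?_ _ _ c3)), hs3, Or.inl hx'w'⟩
      rintro p q ⟨hs, hq⟩
      exact ⟨hs, Or.inr ⟨hPy, Pclosed' hq hPw⟩⟩
    · intro x' hstep hnr
      have hnr0 : ¬ r0 x x' := fun h => hnr (Or.inl h)
      have hnPx' : ¬ P x' := fun h => hnr (Or.inr ⟨hPx, h⟩)
      obtain ⟨w'', w', c3, hs3, hne'', hx'w'⟩ := hTrTau x w hxw x' hstep hnr0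
      refine ⟨w'', w', Relation.ReflTransGen.trans cyw ((Relation.ReflTransGen.mono ?_ _ _ c3)), hs3, ?_, Or.inl hx'w'⟩
      · rintro p q ⟨hs, hq⟩
        exact ⟨hs, Or.inr ⟨hPy, Pclosed' hq hPw⟩⟩
      · rintro (h | ⟨_, hPw'⟩)
        · exact hne'' h
        · exact hnPx' (Pclosed hx'w' hPw')
  · -- x outside the merged class: r0 verbatim
    have hxy0 : r0 x y := by
      rcases hxy with h | ⟨hx, _⟩
      · exact h
      · exact absurd hx hPx
    have hnPy : ¬ P y := fun h => hPx (Pclosed hxy0 h)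
    constructor
    · intro a ha x' hstep
      obtain ⟨y'', y', c3, hs3, hx'y'⟩ := hTrVis x y hxy0 a ha x' hstep
      refine ⟨y'', y', (Relation.ReflTransGen.mono ?_ _ _ c3), hs3, Or.inl hx'y'⟩
      rintro p q ⟨hs, hq⟩
      exact ⟨hs, Or.inl hq⟩
    · intro x' hstep hnr
      have hnr0 : ¬ r0 x x' := fun h => hnr (Or.inl h)
      obtain ⟨y'', y', c3, hs3, hne'', hx'y'⟩ := hTrTau x y hxy0 x' hstep hnr0
      have hnPy'' : ¬ P y'' := by
        rcases Relation.ReflTransGen.cases_tail c3 with h | ⟨c, _, hc⟩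
        · rwa [h]
        · exact fun h => hnPy (Pclosed hc.2 h)
      refine ⟨y'', y', (Relation.ReflTransGen.mono ?_ _ _ c3), hs3, ?_, Or.inl hx'y'⟩
      · rintro p q ⟨hs, hq⟩
        exact ⟨hs, Or.inl hq⟩
      · rintro (h | ⟨hPy'', _⟩)
        · exact hne'' h
        · exact hnPy'' hPy''
end

section
/- Let Γ = (C, A, Δ) be a normed BPA system, γ a process, and Rd(γ) = {X ∈ C : Xγ ≃ γ}. Then for every process α, αγ ≃ γ if and only if α ∈ (Rd(γ))*, i.e., every constant occurring in α lies in Rd(γ). -/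
open Relation

/-! ### Auxiliary development -/

namespace BPA

variable {C A : Type}

theorem not_step_nil (Γ : BPA C A) {ℓ : A} {q : List C} : ¬ Γ.Step ℓ [] q := by
  rintro ⟨X, γ, β, _, h, _⟩; simp at h

theorem tauStar_nil (Γ : BPA C A) {q : List C} (h : Γ.TauStar [] q) : q = [] := by
  rcases h.cases_head with h | ⟨c, hc, _⟩
  · exact h.symm
  · exact absurd hc Γ.not_step_nil

theorem step_cons_inv (Γ : BPA C A) {ℓ : A} {X : C} {ρ q : List C}
    (h : Γ.Step ℓ (X :: ρ) q) : ∃ η, (X, ℓ, η) ∈ Γ.rules ∧ q = η ++ ρ := by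
  obtain ⟨X', γ, β, hr, he, rfl⟩ := h
  rw [List.cons.injEq] at he
  obtain ⟨rfl, rfl⟩ := he
  exact ⟨γ, hr, rfl⟩

theorem step_append (Γ : BPA C A) {ℓ : A} {u v : List C} (h : Γ.Step ℓ u v)
    (σ : List C) : Γ.Step ℓ (u ++ σ) (v ++ σ) := by
  obtain ⟨X, γ, β, hr, rfl, rfl⟩ := h
  exact ⟨X, γ, β ++ σ, hr, rfl, by simp⟩

/-! ### Semi-branching bisimulation -/

def SB (Γ : BPA C A) (r : List C → List C → Prop) : Prop :=
  ∀ α β, r α β → ∀ ℓ α', Γ.Step ℓ α α' →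
    ∃ β₀, Γ.TauStar β β₀ ∧ r α β₀ ∧
      ((ℓ = Γ.tau ∧ r α' β₀) ∨ ∃ β', Γ.Step ℓ β₀ β' ∧ r α' β')

theorem sb_of_iff {Γ : BPA C A} {r r' : List C → List C → Prop}
    (h : ∀ x y, r x y ↔ r' x y) (hr : Γ.SB r) : Γ.SB r' := by
  intro α β hab ℓ α' hst
  obtain ⟨β₀, h1, h2, h3⟩ := hr α β ((h _ _).mpr hab) ℓ α' hst
  refine ⟨β₀, h1, (h _ _).mp h2, ?_⟩
  rcases h3 with ⟨hℓ, h4⟩ | ⟨β', h4, h5⟩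
  · exact Or.inl ⟨hℓ, (h _ _).mp h4⟩
  · exact Or.inr ⟨β', h4, (h _ _).mp h5⟩

theorem sb_eq (Γ : BPA C A) : Γ.SB (fun x y => x = y) := by
  rintro α β rfl ℓ α' hst
  exact ⟨α, Relation.ReflTransGen.refl, rfl, Or.inr ⟨α', hst, rfl⟩⟩

/-- Semi-branching bisimilarity. -/
def SBis (Γ : BPA C A) (α β : List C) : Prop :=
  ∃ r, Γ.SB r ∧ Γ.SB (fun x y => r y x) ∧ r α β

theorem sbis_refl (Γ : BPA C A) (α : List C) : Γ.SBis α α :=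
  ⟨fun x y => x = y, Γ.sb_eq, sb_of_iff (fun _ _ => eq_comm) Γ.sb_eq, rfl⟩

theorem sbis_symm {Γ : BPA C A} {α β : List C} (h : Γ.SBis α β) : Γ.SBis β α := by
  obtain ⟨r, h1, h2, h3⟩ := h
  exact ⟨fun x y => r y x, h2, h1, h3⟩

theorem sb_tauStar {Γ : BPA C A} {r : List C → List C → Prop} (hr : Γ.SB r)
    {x x' : List C} (h : Γ.TauStar x x') :
    ∀ y, r x y → ∃ y', Γ.TauStar y y' ∧ r x' y' := by
  induction h using Relation.ReflTransGen.head_induction_on with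
  | refl => exact fun y hy => ⟨y, Relation.ReflTransGen.refl, hy⟩
  | head hst hrest ih =>
    intro y hy
    obtain ⟨β₀, h1, _, h3⟩ := hr _ y hy _ _ hst
    rcases h3 with ⟨_, h4⟩ | ⟨β', h4, h5⟩
    · obtain ⟨y', h5, h6⟩ := ih β₀ h4
      exact ⟨y', h1.trans h5, h6⟩
    · obtain ⟨y', h6, h7⟩ := ih β' h5
      exact ⟨y', (h1.tail h4).trans h6, h7⟩

theorem sb_comp {Γ : BPA C A} {r1 r2 : List C → List C → Prop}
    (h1 : Γ.SB r1) (h2 : Γ.SB r2) : Γ.SB (fun x z => ∃ y, r1 x y ∧ r2 y z) := by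
  rintro α β ⟨m, hm1, hm2⟩ ℓ α' hst
  obtain ⟨m₀, hts, ham, hd⟩ := h1 α m hm1 ℓ α' hst
  obtain ⟨b, hb1, hb2⟩ := sb_tauStar h2 hts β hm2
  rcases hd with ⟨hℓ, h4⟩ | ⟨m', h4, h5⟩
  · exact ⟨b, hb1, ⟨m₀, ham, hb2⟩, Or.inl ⟨hℓ, ⟨m₀, h4, hb2⟩⟩⟩
  · obtain ⟨b₀, hc1, hc2, hc3⟩ := h2 m₀ b hb2 ℓ m' h4
    rcases hc3 with ⟨hℓ, h6⟩ | ⟨b', h6, h7⟩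
    · exact ⟨b₀, hb1.trans hc1, ⟨m₀, ham, hc2⟩, Or.inl ⟨hℓ, ⟨m', h5, h6⟩⟩⟩
    · exact ⟨b₀, hb1.trans hc1, ⟨m₀, ham, hc2⟩, Or.inr ⟨b', h6, ⟨m', h5, h7⟩⟩⟩

theorem sbis_trans {Γ : BPA C A} {α β δ : List C} (h : Γ.SBis α β)
    (h' : Γ.SBis β δ) : Γ.SBis α δ := by
  obtain ⟨r1, h11, h12, h13⟩ := h
  obtain ⟨r2, h21, h22, h23⟩ := h'
  refine ⟨fun x z => ∃ y, r1 x y ∧ r2 y z, sb_comp h11 h21, ?_, β, h13, h23⟩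
  exact sb_of_iff (fun x y => by tauto) (sb_comp h22 h12)

theorem sb_sbis (Γ : BPA C A) : Γ.SB Γ.SBis := by
  rintro α β ⟨r, h1, h2, h3⟩ ℓ α' hst
  obtain ⟨β₀, hts, hab, hd⟩ := h1 α β h3 ℓ α' hst
  refine ⟨β₀, hts, ⟨r, h1, h2, hab⟩, ?_⟩
  rcases hd with ⟨hℓ, h4⟩ | ⟨β', h4, h5⟩
  · exact Or.inl ⟨hℓ, ⟨r, h1, h2, h4⟩⟩
  · exact Or.inr ⟨β', h4, ⟨r, h1, h2, h5⟩⟩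

/-! ### The stuttering lemma -/

theorem sbis_stutter {Γ : BPA C A} {b y b'' : List C} (h1 : Γ.TauStar b y)
    (h2 : Γ.TauStar y b'') (h3 : Γ.SBis b b'') : Γ.SBis b y := by
  set r : List C → List C → Prop := fun x z =>
    Γ.SBis x z ∨ (Γ.TauStar x z ∧ Γ.TauStar z b'' ∧ Γ.SBis x b'') ∨
      (Γ.TauStar z x ∧ Γ.TauStar x b'' ∧ Γ.SBis z b'') with hrdef
  have hsb : Γ.SB r := by
    rintro α β (hab | ⟨hab, hbB, haB⟩ | ⟨hba, haB, hbB⟩) ℓ α' hst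
    · obtain ⟨β₀, k1, k2, k3⟩ := Γ.sb_sbis α β hab ℓ α' hst
      refine ⟨β₀, k1, Or.inl k2, ?_⟩
      rcases k3 with ⟨hℓ, k4⟩ | ⟨β', k4, k5⟩
      · exact Or.inl ⟨hℓ, Or.inl k4⟩
      · exact Or.inr ⟨β', k4, Or.inl k5⟩
    · obtain ⟨β₀, k1, k2, k3⟩ := Γ.sb_sbis α b'' haB ℓ α' hst
      refine ⟨β₀, hbB.trans k1, Or.inl k2, ?_⟩
      rcases k3 with ⟨hℓ, k4⟩ | ⟨β', k4, k5⟩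
      · exact Or.inl ⟨hℓ, Or.inl k4⟩
      · exact Or.inr ⟨β', k4, Or.inl k5⟩
    · exact ⟨α, hba, Or.inl (Γ.sbis_refl α),
        Or.inr ⟨α', hst, Or.inl (Γ.sbis_refl α')⟩⟩
  have hiff : ∀ x z, r x z ↔ r z x := by
    intro x z
    simp only [hrdef]
    constructor
    · rintro (h | h | h)
      · exact Or.inl (sbis_symm h)
      · exact Or.inr (Or.inr h)
      · exact Or.inr (Or.inl h)
    · rintro (h | h | h)
      · exact Or.inl (sbis_symm h)
      · exact Or.inr (Or.inr h)
      · exact Or.inr (Or.inl h)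
  exact ⟨r, hsb, sb_of_iff (fun x z => hiff x z) hsb,
    Or.inr (Or.inl ⟨h1, h2, h3⟩)⟩

theorem tauStar_relChain {Γ : BPA C A} {b b'' : List C} (h : Γ.TauStar b b'')
    (hs : Γ.SBis b b'') : RelChain (Γ.Step Γ.tau) Γ.SBis b b b'' := by
  have aux : ∀ x, Γ.TauStar x b'' → Γ.TauStar b x →
      RelChain (Γ.Step Γ.tau) Γ.SBis b x b'' := by
    intro x hx
    induction hx using Relation.ReflTransGen.head_induction_on with
    | refl => intro _; exact Relation.ReflTransGen.refl
    | head hst hrest ih =>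
      rename_i x c
      intro hbx
      have hbc : Γ.TauStar b c := hbx.tail hst
      exact Relation.ReflTransGen.head ⟨hst, sbis_stutter hbc hrest hs⟩ (ih hbc)
  exact aux b h Relation.ReflTransGen.refl

theorem relChain_anchor {s r : List C → List C → Prop} {anchor x y : List C}
    (h : RelChain s r anchor x y) (hx : r anchor x) : r anchor y := by
  rcases h.cases_tail with h | ⟨c, _, hc⟩
  · exact h ▸ hx
  · exact hc.2

theorem relChain_tauStar {Γ : BPA C A} {r : List C → List C → Prop}
    {anchor x y : List C} (h : RelChain (Γ.Step Γ.tau) r anchor x y) :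
    Γ.TauStar x y :=
  Relation.ReflTransGen.mono (fun _ _ hxy => hxy.1) _ _ h

/-! ### `SBis` is a branching bisimulation -/

theorem sbis_isBB (Γ : BPA C A) : Γ.IsBranchingBisim Γ.SBis := by
  refine ⟨⟨Γ.sbis_refl, sbis_symm, sbis_trans⟩, ?_⟩
  intro α β hab
  constructor
  · intro a ha α' hst
    obtain ⟨β₀, hts, hab₀, hd⟩ := Γ.sb_sbis α β hab a α' hst
    rcases hd with ⟨hℓ, _⟩ | ⟨β', hst', hrel⟩
    · exact absurd hℓ ha
    · exact ⟨β₀, β', tauStar_relChain hts (sbis_trans (sbis_symm hab) hab₀),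
        hst', hrel⟩
  · intro α' hst hn
    obtain ⟨β₀, hts, hab₀, hd⟩ := Γ.sb_sbis α β hab Γ.tau α' hst
    rcases hd with ⟨_, h4⟩ | ⟨β', hst', hrel⟩
    · exact absurd (sbis_trans hab₀ (sbis_symm h4)) hn
    · refine ⟨β₀, β', tauStar_relChain hts (sbis_trans (sbis_symm hab) hab₀),
        hst', ?_, hrel⟩
      intro hc
      exact hn (sbis_trans (sbis_trans hab₀ hc) (sbis_symm hrel))

theorem sb_of_bb {Γ : BPA C A} {r : List C → List C → Prop}
    (h : Γ.IsBranchingBisim r) : Γ.SB r := by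
  obtain ⟨heq, htr⟩ := h
  intro α β hab ℓ α' hst
  by_cases hℓ : ℓ = Γ.tau
  · subst hℓ
    by_cases hin : r α α'
    · exact ⟨β, Relation.ReflTransGen.refl, hab,
        Or.inl ⟨rfl, heq.trans (heq.symm hin) hab⟩⟩
    · obtain ⟨β'', β', hch, hst', _, hrel⟩ := (htr α β hab).2 α' hst hin
      exact ⟨β'', relChain_tauStar hch,
        heq.trans hab (relChain_anchor hch (heq.refl β)),
        Or.inr ⟨β', hst', hrel⟩⟩
  · obtain ⟨β'', β', hch, hst', hrel⟩ := (htr α β hab).1 ℓ hℓ α' hst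
    exact ⟨β'', relChain_tauStar hch,
      heq.trans hab (relChain_anchor hch (heq.refl β)),
      Or.inr ⟨β', hst', hrel⟩⟩

theorem bisim_iff_sbis (Γ : BPA C A) (α β : List C) :
    Γ.Bisim α β ↔ Γ.SBis α β := by
  constructor
  · rintro ⟨r, hbb, hr⟩
    refine ⟨r, sb_of_bb hbb, ?_, hr⟩
    exact sb_of_iff (fun x y => ⟨hbb.1.symm, hbb.1.symm⟩) (sb_of_bb hbb)
  · intro h
    exact ⟨Γ.SBis, Γ.sbis_isBB, h⟩

/-! ### Left-append congruence -/

theorem sbis_append_left {Γ : BPA C A} (δ : List C) {p q : List C}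
    (h : Γ.SBis p q) : Γ.SBis (δ ++ p) (δ ++ q) := by
  set r : List C → List C → Prop := fun x y =>
    ∃ δ p q, Γ.SBis p q ∧ x = δ ++ p ∧ y = δ ++ q with hrdef
  have hsb : Γ.SB r := by
    rintro α β ⟨δ, p, q, hpq, rfl, rfl⟩ ℓ α' hst
    cases δ with
    | nil =>
      simp only [List.nil_append] at hst ⊢
      obtain ⟨β₀, k1, k2, k3⟩ := Γ.sb_sbis p q hpq ℓ α' hst
      refine ⟨β₀, k1, ⟨[], p, β₀, k2, by simp, by simp⟩, ?_⟩
      rcases k3 with ⟨hℓ, k4⟩ | ⟨β', k4, k5⟩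
      · exact Or.inl ⟨hℓ, ⟨[], α', β₀, k4, by simp, by simp⟩⟩
      · exact Or.inr ⟨β', k4, ⟨[], α', β', k5, by simp, by simp⟩⟩
    | cons X δ' =>
      simp only [List.cons_append] at hst ⊢
      obtain ⟨η, hrule, rfl⟩ := Γ.step_cons_inv hst
      refine ⟨X :: (δ' ++ q), Relation.ReflTransGen.refl,
        ⟨X :: δ', p, q, hpq, by simp, by simp⟩,
        Or.inr ⟨η ++ (δ' ++ q), ⟨X, η, δ' ++ q, hrule, rfl, rfl⟩,
          ⟨η ++ δ', p, q, hpq, by simp, by simp⟩⟩⟩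
  have hiff : ∀ x y, r x y ↔ r y x := by
    intro x y
    constructor
    · rintro ⟨δ, p, q, hpq, rfl, rfl⟩
      exact ⟨δ, q, p, sbis_symm hpq, rfl, rfl⟩
    · rintro ⟨δ, p, q, hpq, rfl, rfl⟩
      exact ⟨δ, q, p, sbis_symm hpq, rfl, rfl⟩
  exact ⟨r, hsb, sb_of_iff (fun x y => hiff x y) hsb, ⟨δ, p, q, h, rfl, rfl⟩⟩

/-! ### Costed reachability and branching norms -/

/-- Reachability from `p` down to `w`, counting non-inert steps. -/
inductive CRT (Γ : BPA C A) (w : List C) : List C → ℕ → Prop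
  | refl : CRT Γ w w 0
  | inert {p p' c} : Γ.Step Γ.tau p p' → Γ.SBis p p' → CRT Γ w p' c → CRT Γ w p c
  | strong {ℓ : A} {p p' c} : Γ.Step ℓ p p' → CRT Γ w p' c → CRT Γ w p (c + 1)

theorem normedProc_all {Γ : BPA C A} (hΓ : Γ.Normed) (p : List C) :
    Γ.NormedProc p := by
  induction p with
  | nil => exact Relation.ReflTransGen.refl
  | cons X p' ih =>
    have h1 : Relation.ReflTransGen Γ.AnyStep ([X] ++ p') ([] ++ p') := by
      refine Relation.ReflTransGen.lift (· ++ p') ?_ _ _ (hΓ X)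
      rintro a b ⟨ℓ, hab⟩
      show Γ.AnyStep (a ++ p') (b ++ p')
      exact ⟨ℓ, Γ.step_append hab p'⟩
    simp only [List.nil_append] at h1
    exact Relation.ReflTransGen.trans h1 ih

theorem crt_of_path {Γ : BPA C A} {p : List C}
    (h : Relation.ReflTransGen Γ.AnyStep p []) : ∃ c, Γ.CRT [] p c := by
  induction h using Relation.ReflTransGen.head_induction_on with
  | refl => exact ⟨0, CRT.refl⟩
  | head hst _ ih =>
    obtain ⟨ℓ, hst⟩ := hst
    obtain ⟨c, hc⟩ := ih
    exact ⟨c + 1, CRT.strong hst hc⟩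

theorem crt_exists {Γ : BPA C A} (hΓ : Γ.Normed) (p : List C) :
    ∃ c, Γ.CRT [] p c := crt_of_path (normedProc_all hΓ p)

theorem crt_decomp {Γ : BPA C A} :
    ∀ {p c}, Γ.CRT [] p c → ∀ δ σ, p = δ ++ σ →
      ∃ c1 c2, c = c1 + c2 ∧ Γ.CRT σ p c1 ∧ Γ.CRT [] σ c2 := by
  intro p c h
  induction h with
  | refl =>
    rintro δ σ hp
    obtain ⟨rfl, rfl⟩ := List.append_eq_nil_iff.mp hp.symm
    exact ⟨0, 0, rfl, CRT.refl, CRT.refl⟩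
  | inert hst hs hc ih =>
    rename_i p p' c
    rintro δ σ rfl
    cases δ with
    | nil =>
      exact ⟨0, c, by omega, CRT.refl, by simpa using CRT.inert hst hs hc⟩
    | cons X δ' =>
      rw [List.cons_append] at hst
      obtain ⟨η, hrule, rfl⟩ := Γ.step_cons_inv hst
      obtain ⟨c1, c2, hsum, h1, h2⟩ := ih (η ++ δ') σ (by simp)
      exact ⟨c1, c2, hsum, CRT.inert hst hs h1, h2⟩
  | strong hst hc ih =>
    rename_i ℓ p p' c
    rintro δ σ rfl
    cases δ with
    | nil =>
      exact ⟨0, c + 1, by omega, CRT.refl, by simpa using CRT.strong hst hc⟩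
    | cons X δ' =>
      rw [List.cons_append] at hst
      obtain ⟨η, hrule, rfl⟩ := Γ.step_cons_inv hst
      obtain ⟨c1, c2, hsum, h1, h2⟩ := ih (η ++ δ') σ (by simp)
      exact ⟨c1 + 1, c2, by omega, CRT.strong hst h1, h2⟩

theorem crt_zero_sbis {Γ : BPA C A} {σ : List C} :
    ∀ {p c}, Γ.CRT σ p c → c = 0 → Γ.SBis p σ := by
  intro p c h
  induction h with
  | refl => exact fun _ => Γ.sbis_refl σ
  | inert _ hs _ ih => exact fun hc => sbis_trans hs (ih hc)
  | strong _ _ _ => exact fun hc => absurd hc (Nat.succ_ne_zero _)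

theorem sbis_nil_crt {Γ : BPA C A} (hΓ : Γ.Normed) {u : List C}
    (h : Γ.SBis u []) : Γ.CRT [] u 0 := by
  have aux : ∀ u, Relation.ReflTransGen Γ.AnyStep u [] → Γ.SBis u [] →
      Γ.CRT [] u 0 := by
    intro u hpath
    induction hpath using Relation.ReflTransGen.head_induction_on with
    | refl => exact fun _ => CRT.refl
    | head hst _ ih =>
      intro hx
      obtain ⟨ℓ, hst⟩ := hst
      obtain ⟨β₀, hts, _, hd⟩ := Γ.sb_sbis _ [] hx ℓ _ hst
      have hβ₀ : β₀ = [] := Γ.tauStar_nil hts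
      subst hβ₀
      rcases hd with ⟨hℓ, hy⟩ | ⟨β', hst', _⟩
      · subst hℓ
        exact CRT.inert hst (sbis_trans hx (sbis_symm hy)) (ih hy)
      · exact absurd hst' Γ.not_step_nil
  exact aux u (normedProc_all hΓ u) h

theorem crt_of_chain {Γ : BPA C A} {u u'' : List C} {k : ℕ}
    (hch : RelChain (Γ.Step Γ.tau) Γ.SBis u u u'') (hk : Γ.CRT [] u'' k) :
    Γ.CRT [] u k := by
  have aux : ∀ x, RelChain (Γ.Step Γ.tau) Γ.SBis u x u'' → Γ.SBis u x →
      Γ.CRT [] x k := by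
    intro x hx
    induction hx using Relation.ReflTransGen.head_induction_on with
    | refl => exact fun _ => hk
    | head hst _ ih =>
      intro hux
      exact CRT.inert hst.1 (sbis_trans (sbis_symm hux) hst.2) (ih hst.2)
  exact aux u hch (Γ.sbis_refl u)

theorem sbis_crt_le {Γ : BPA C A} (hΓ : Γ.Normed) :
    ∀ {v c}, Γ.CRT [] v c → ∀ u, Γ.SBis u v → ∃ c', c' ≤ c ∧ Γ.CRT [] u c' := by
  intro v c h
  induction h with
  | refl => exact fun u hu => ⟨0, le_refl 0, sbis_nil_crt hΓ hu⟩
  | inert hst hs hc ih => exact fun u hu => ih u (sbis_trans hu hs)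
  | strong hst hc ih =>
    rename_i ℓ v v1 c
    intro u hu
    by_cases hin : ℓ = Γ.tau ∧ Γ.SBis v v1
    · obtain ⟨c', hle, hc'⟩ := ih u (sbis_trans hu hin.2)
      exact ⟨c', by omega, hc'⟩
    · have hvu : Γ.SBis v u := sbis_symm hu
      have hcl := (Γ.sbis_isBB).2 v u hvu
      by_cases hℓ : ℓ = Γ.tau
      · subst hℓ
        have hni : ¬ Γ.SBis v v1 := fun hc => hin ⟨rfl, hc⟩
        obtain ⟨u'', u', hch, hst', _, hrel⟩ := hcl.2 v1 hst hni
        obtain ⟨c', hle, hc'⟩ := ih u' (sbis_symm hrel)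
        exact ⟨c' + 1, by omega, crt_of_chain hch (CRT.strong hst' hc')⟩
      · obtain ⟨u'', u', hch, hst', hrel⟩ := hcl.1 ℓ hℓ v1 hst
        obtain ⟨c', hle, hc'⟩ := ih u' (sbis_symm hrel)
        exact ⟨c' + 1, by omega, crt_of_chain hch (CRT.strong hst' hc')⟩

/-- The branching norm. -/
noncomputable def bn (Γ : BPA C A) (p : List C) : ℕ :=
  sInf {c | Γ.CRT [] p c}

theorem bn_spec {Γ : BPA C A} (hΓ : Γ.Normed) (p : List C) :
    Γ.CRT [] p (Γ.bn p) :=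
  Nat.sInf_mem (crt_exists hΓ p)

theorem bn_le {Γ : BPA C A} {p : List C} {c : ℕ} (h : Γ.CRT [] p c) :
    Γ.bn p ≤ c :=
  Nat.sInf_le h

theorem bn_eq_of_sbis {Γ : BPA C A} (hΓ : Γ.Normed) {u v : List C}
    (h : Γ.SBis u v) : Γ.bn u = Γ.bn v := by
  refine le_antisymm ?_ ?_
  · obtain ⟨c', hle, hc'⟩ := sbis_crt_le hΓ (bn_spec hΓ v) u h
    exact le_trans (bn_le hc') hle
  · obtain ⟨c', hle, hc'⟩ := sbis_crt_le hΓ (bn_spec hΓ u) v (sbis_symm h)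
    exact le_trans (bn_le hc') hle

theorem bn_suffix_le {Γ : BPA C A} (hΓ : Γ.Normed) (δ σ : List C) :
    Γ.bn σ ≤ Γ.bn (δ ++ σ) := by
  obtain ⟨c1, c2, hsum, _, h2⟩ := crt_decomp (bn_spec hΓ (δ ++ σ)) δ σ rfl
  have := bn_le h2
  omega

/-- Popping a redundant constant costs nothing and is inert. -/
theorem sbis_pop {Γ : BPA C A} (hΓ : Γ.Normed) {X : C} {δ γ : List C}
    (h : Γ.SBis (X :: (δ ++ γ)) γ) : Γ.SBis (X :: (δ ++ γ)) (δ ++ γ) := by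
  set μ := δ ++ γ with hμ
  have h1 : Γ.bn (X :: μ) = Γ.bn γ := bn_eq_of_sbis hΓ h
  have h2 : Γ.bn γ ≤ Γ.bn μ := bn_suffix_le hΓ δ γ
  obtain ⟨c1, c2, hsum, hto, hrest⟩ :=
    crt_decomp (bn_spec hΓ (X :: μ)) [X] μ rfl
  have h3 : Γ.bn μ ≤ c2 := bn_le hrest
  have hc1 : c1 = 0 := by omega
  exact crt_zero_sbis hto hc1

end BPA


/-- For a process `γ`, `αγ ≃ γ` iff every constant of `α` lies in
`Rd(γ) = {X : Xγ ≃ γ}`. -/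
theorem redundant_constants {C A : Type} (Γ : BPA C A) (hΓ : Γ.Normed)
    (γ α : List C) :
    Γ.Bisim (α ++ γ) γ ↔ ∀ X ∈ α, X ∈ {X : C | Γ.Bisim (X :: γ) γ} := by
  simp only [Set.mem_setOf_eq, Γ.bisim_iff_sbis]
  induction α with
  | nil => simp [Γ.sbis_refl]
  | cons X α' ih =>
    constructor
    · intro h
      rw [List.cons_append] at h
      have hpop : Γ.SBis (X :: (α' ++ γ)) (α' ++ γ) := BPA.sbis_pop hΓ h
      have h2 : Γ.SBis (α' ++ γ) γ := BPA.sbis_trans (BPA.sbis_symm hpop) h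
      intro Y hY
      rcases List.mem_cons.mp hY with rfl | hY
      · have hc : Γ.SBis (Y :: (α' ++ γ)) (Y :: γ) := by
          simpa using BPA.sbis_append_left [Y] h2
        exact BPA.sbis_trans (BPA.sbis_trans (BPA.sbis_symm hc) hpop) h2
      · exact (ih.mp h2) Y hY
    · intro h
      have hX : Γ.SBis (X :: γ) γ := h X List.mem_cons_self
      have h2 : Γ.SBis (α' ++ γ) γ := ih.mpr fun Y hY => h Y (List.mem_cons_of_mem X hY)
      have hc : Γ.SBis (X :: (α' ++ γ)) (X :: γ) := by
        simpa using BPA.sbis_append_left [X] h2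
      rw [List.cons_append]
      exact BPA.sbis_trans hc hX
end

section
/- Let Γ = (C, A, Δ) be a normed BPA system and for a process γ let Rd(γ) = {X ∈ C : Xγ ≃ γ}. If γ1 and γ2 are processes with Rd(γ1) = Rd(γ2), then for all processes α, β: αγ1 ≃ βγ1 if and only if αγ2 ≃ βγ2. -/
open Relation

namespace BPAProof

open BPA Relation

variable {C A : Type}

/-! ### Basic step lemmas -/

theorem no_step_nil (Γ : BPA C A) (ℓ : A) (q : List C) : ¬ Γ.Step ℓ [] q := by
  rintro ⟨X, γ, β, _, h, _⟩; cases h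

theorem step_append {Γ : BPA C A} {ℓ : A} {p q : List C} (r : List C)
    (h : Γ.Step ℓ p q) : Γ.Step ℓ (p ++ r) (q ++ r) := by
  obtain ⟨X, g, β, hr, hp, hq⟩ := h
  exact ⟨X, g, β ++ r, hr, by simp [hp], by simp [hq]⟩

theorem step_decomp {Γ : BPA C A} {ℓ : A} {a γ q : List C}
    (h : Γ.Step ℓ (a ++ γ) q) (ha : a ≠ []) :
    ∃ a₀, Γ.Step ℓ a a₀ ∧ q = a₀ ++ γ := by
  obtain ⟨X, ζ, β, hr, hp, hq⟩ := h
  cases a with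
  | nil => exact absurd rfl ha
  | cons Y t =>
    rw [List.cons_append] at hp
    injection hp with h1 h2
    subst h2
    exact ⟨ζ ++ t, ⟨X, ζ, t, hr, by rw [h1], rfl⟩, by simp [hq]⟩

theorem tauStar_append {Γ : BPA C A} {p q : List C} (r : List C)
    (h : Γ.TauStar p q) : Γ.TauStar (p ++ r) (q ++ r) := by
  induction h with
  | refl => exact ReflTransGen.refl
  | tail _ hs ih => exact ih.tail (step_append r hs)

theorem tauStar_from_nil {Γ : BPA C A} {q : List C} (h : Γ.TauStar [] q) :
    q = [] := by
  induction h with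
  | refl => rfl
  | tail _ hs ih => subst ih; exact absurd hs (no_step_nil _ _ _)

theorem tauStar_split {Γ : BPA C A} {p a γ : List C} (h : Γ.TauStar p [])
    (hp : p = a ++ γ) : Γ.TauStar a [] ∧ Γ.TauStar γ [] := by
  have key : ∀ q, Γ.TauStar q [] → ∀ a γ : List C, q = a ++ γ →
      Γ.TauStar a [] ∧ Γ.TauStar γ [] := by
    intro q hq
    induction hq using ReflTransGen.head_induction_on with
    | refl =>
      intro a γ hp
      obtain ⟨rfl, rfl⟩ := List.append_eq_nil_iff.mp hp.symm
      exact ⟨ReflTransGen.refl, ReflTransGen.refl⟩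
    | head hs h' ih =>
      rintro a γ rfl
      rcases eq_or_ne a [] with rfl | ha
      · rw [List.nil_append] at hs
        exact ⟨ReflTransGen.refl, ReflTransGen.head hs h'⟩
      · obtain ⟨a₀, hstep, rfl⟩ := step_decomp hs ha
        obtain ⟨h1, h2⟩ := ih a₀ γ rfl
        exact ⟨ReflTransGen.head hstep h1, h2⟩
  exact key p h a γ hp

/-! ### Semi-branching bisimulations -/

/-- Semi-branching bisimulation transfer property (one direction). -/
def Semi (Γ : BPA C A) (r : List C → List C → Prop) : Prop :=
  ∀ x y, r x y → ∀ ℓ x', Γ.Step ℓ x x' →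
    (ℓ = Γ.tau ∧ ∃ y'', Γ.TauStar y y'' ∧ r x y'' ∧ r x' y'') ∨
    (∃ y'' y', Γ.TauStar y y'' ∧ Γ.Step ℓ y'' y' ∧ r x y'' ∧ r x' y')

/-- The largest symmetric semi-branching bisimulation. -/
def Sb (Γ : BPA C A) (x y : List C) : Prop :=
  ∃ r, Semi Γ r ∧ (∀ a b, r a b → r b a) ∧ r x y

theorem semi_eq (Γ : BPA C A) : Semi Γ (· = ·) := by
  rintro x y rfl ℓ x' hs
  exact Or.inr ⟨x, x', ReflTransGen.refl, hs, rfl, rfl⟩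

theorem sb_refl (Γ : BPA C A) (x : List C) : Sb Γ x x :=
  ⟨(· = ·), semi_eq Γ, fun a b h => h.symm, rfl⟩

theorem sb_symm {Γ : BPA C A} {x y : List C} (h : Sb Γ x y) : Sb Γ y x := by
  obtain ⟨r, hr, hsym, hxy⟩ := h; exact ⟨r, hr, hsym, hsym _ _ hxy⟩

theorem semi_sb (Γ : BPA C A) : Semi Γ (Sb Γ) := by
  rintro x y ⟨r, hr, hsym, hxy⟩ ℓ x' hs
  rcases hr x y hxy ℓ x' hs with ⟨hℓ, y'', h1, h2, h3⟩ | ⟨y'', y', h1, h2, h3, h4⟩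
  · exact Or.inl ⟨hℓ, y'', h1, ⟨r, hr, hsym, h2⟩, ⟨r, hr, hsym, h3⟩⟩
  · exact Or.inr ⟨y'', y', h1, h2, ⟨r, hr, hsym, h3⟩, ⟨r, hr, hsym, h4⟩⟩

/-- Weak saturation: silent evolution is tracked on the other side. -/
theorem semi_ws {Γ : BPA C A} {r : List C → List C → Prop} (hr : Semi Γ r)
    {x y x' : List C} (hxy : r x y) (h : Γ.TauStar x x') :
    ∃ y', Γ.TauStar y y' ∧ r x' y' := by
  induction h using ReflTransGen.head_induction_on generalizing y with
  | refl => exact ⟨y, ReflTransGen.refl, hxy⟩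
  | @head x x₁ hs _ ih =>
    rcases hr _ _ hxy _ _ hs with ⟨_, y₁, h1, _, h3⟩ | ⟨y'', y₁, h1, h2, _, h3⟩
    · obtain ⟨y', hy1, hy2⟩ := ih h3
      exact ⟨y', h1.trans hy1, hy2⟩
    · obtain ⟨y', hy1, hy2⟩ := ih h3
      exact ⟨y', (h1.tail h2).trans hy1, hy2⟩

theorem sb_trans {Γ : BPA C A} {x y z : List C} (h1 : Sb Γ x y)
    (h2 : Sb Γ y z) : Sb Γ x z := by
  obtain ⟨r1, hr1, hs1, hxy⟩ := h1
  obtain ⟨r2, hr2, hs2, hyz⟩ := h2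
  refine ⟨fun a c => (∃ b, r1 a b ∧ r2 b c) ∨ (∃ b, r2 a b ∧ r1 b c), ?_, ?_, 
    Or.inl ⟨y, hxy, hyz⟩⟩
  · clear hxy hyz x y z
    have key : ∀ (r1 r2 : List C → List C → Prop), Semi Γ r1 → Semi Γ r2 →
        ∀ x z, (∃ b, r1 x b ∧ r2 b z) → ∀ ℓ x', Γ.Step ℓ x x' →
        (ℓ = Γ.tau ∧ ∃ y'', Γ.TauStar z y'' ∧ (∃ b, r1 x b ∧ r2 b y'') ∧
          (∃ b, r1 x' b ∧ r2 b y'')) ∨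
        (∃ y'' y', Γ.TauStar z y'' ∧ Γ.Step ℓ y'' y' ∧
          (∃ b, r1 x b ∧ r2 b y'') ∧ (∃ b, r1 x' b ∧ r2 b y')) := by
      intro r1 r2 hr1 hr2 x z ⟨b, hxb, hbz⟩ ℓ x' hs
      rcases hr1 _ _ hxb _ _ hs with ⟨hℓ, b₁, hb1, hb2, hb3⟩ |
          ⟨b'', b', hb1, hb2, hb3, hb4⟩
      · obtain ⟨z₁, hz1, hz2⟩ := semi_ws hr2 hbz hb1
        exact Or.inl ⟨hℓ, z₁, hz1, ⟨b₁, hb2, hz2⟩, ⟨b₁, hb3, hz2⟩⟩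
      · obtain ⟨z₁, hz1, hz2⟩ := semi_ws hr2 hbz hb1
        rcases hr2 _ _ hz2 _ _ hb2 with ⟨hℓ, z₂, hc1, hc2, hc3⟩ |
            ⟨z₂, z₃, hc1, hc2, hc3, hc4⟩
        · exact Or.inl ⟨hℓ, z₂, hz1.trans hc1, ⟨b'', hb3, hc2⟩, ⟨b', hb4, hc3⟩⟩
        · exact Or.inr ⟨z₂, z₃, hz1.trans hc1, hc2, ⟨b'', hb3, hc3⟩,
            ⟨b', hb4, hc4⟩⟩
    intro x z hxz ℓ x' hs
    rcases hxz with h | h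
    · rcases key r1 r2 hr1 hr2 x z h ℓ x' hs with ⟨hℓ, y'', ha, hb, hc⟩ |
        ⟨y'', y', ha, hb, hc, hd⟩
      · exact Or.inl ⟨hℓ, y'', ha, Or.inl hb, Or.inl hc⟩
      · exact Or.inr ⟨y'', y', ha, hb, Or.inl hc, Or.inl hd⟩
    · rcases key r2 r1 hr2 hr1 x z h ℓ x' hs with ⟨hℓ, y'', ha, hb, hc⟩ |
        ⟨y'', y', ha, hb, hc, hd⟩
      · exact Or.inl ⟨hℓ, y'', ha, Or.inr hb, Or.inr hc⟩
      · exact Or.inr ⟨y'', y', ha, hb, Or.inr hc, Or.inr hd⟩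
  · rintro a c (⟨b, h1, h2⟩ | ⟨b, h1, h2⟩)
    · exact Or.inr ⟨b, hs2 _ _ h2, hs1 _ _ h1⟩
    · exact Or.inl ⟨b, hs1 _ _ h2, hs2 _ _ h1⟩

end BPAProof
namespace BPAProof
open BPA Relation
variable {C A : Type}

/-- Stuttering: intermediate states of a silent path between `Sb`-related
endpoints are `Sb`-related to the left endpoint. -/
theorem sb_stutter {Γ : BPA C A} {u g w : List C} (huw : Sb Γ u w)
    (h1 : Γ.TauStar u g) (h2 : Γ.TauStar g w) : Sb Γ u g := by
  classical
  set F : List C → List C → Prop := fun a b =>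
    ∃ w', Γ.TauStar a b ∧ Γ.TauStar b w' ∧ Sb Γ a w' with hF
  set E : List C → List C → Prop := fun b w' =>
    ∃ a, Γ.TauStar a b ∧ Γ.TauStar b w' ∧ Sb Γ a w' with hE
  set r : List C → List C → Prop := fun x y =>
    Sb Γ x y ∨ F x y ∨ F y x ∨ E x y ∨ E y x with hr
  have hsub : ∀ x y, Sb Γ x y → r x y := fun x y h => Or.inl h
  have hsym : ∀ a b, r a b → r b a := by
    rintro a b (h | h | h | h | h)
    · exact Or.inl (sb_symm h)
    · exact Or.inr (Or.inr (Or.inl h))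
    · exact Or.inr (Or.inl h)
    · exact Or.inr (Or.inr (Or.inr (Or.inr h)))
    · exact Or.inr (Or.inr (Or.inr (Or.inl h)))
  have hsemi : Semi Γ r := by
    rintro x y (hxy | ⟨w', hp1, hp2, hS⟩ | ⟨w', hp1, hp2, hS⟩ |
        ⟨u', hp1, hp2, hS⟩ | ⟨u', hp1, hp2, hS⟩) ℓ x' hs
    · -- Sb-pair
      rcases semi_sb Γ x y hxy ℓ x' hs with ⟨hℓ, y'', a1, a2, a3⟩ |
          ⟨y'', y', a1, a2, a3, a4⟩
      · exact Or.inl ⟨hℓ, y'', a1, hsub _ _ a2, hsub _ _ a3⟩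
      · exact Or.inr ⟨y'', y', a1, a2, hsub _ _ a3, hsub _ _ a4⟩
    · -- F-pair (x, y): TauStar x y, TauStar y w', Sb x w'
      rcases semi_sb Γ x w' hS ℓ x' hs with ⟨hℓ, w₁, a1, a2, a3⟩ |
          ⟨w₁, w₂, a1, a2, a3, a4⟩
      · exact Or.inl ⟨hℓ, w₁, hp2.trans a1, hsub _ _ a2, hsub _ _ a3⟩
      · exact Or.inr ⟨w₁, w₂, hp2.trans a1, a2, hsub _ _ a3, hsub _ _ a4⟩
    · -- Fᵀ-pair (x, y): TauStar y x, TauStar x w', Sb y w'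
      exact Or.inr ⟨x, x', hp1, hs, hsub _ _ (sb_refl Γ x),
        hsub _ _ (sb_refl Γ x')⟩
    · -- E-pair (x, y): TauStar u' x, TauStar x y, Sb u' y
      obtain ⟨y₁, hy1, hy2⟩ := semi_ws (semi_sb Γ) hS hp1
      rcases semi_sb Γ x y₁ hy2 ℓ x' hs with ⟨hℓ, w₁, a1, a2, a3⟩ |
          ⟨w₁, w₂, a1, a2, a3, a4⟩
      · exact Or.inl ⟨hℓ, w₁, hy1.trans a1, hsub _ _ a2, hsub _ _ a3⟩
      · exact Or.inr ⟨w₁, w₂, hy1.trans a1, a2, hsub _ _ a3, hsub _ _ a4⟩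
    · -- Eᵀ-pair (x, y): TauStar u' y, TauStar y x, Sb u' x
      exact Or.inr ⟨x, x', hp2, hs, hsub _ _ (sb_refl Γ x),
        hsub _ _ (sb_refl Γ x')⟩
  have : r u g := Or.inr (Or.inl ⟨w, h1, h2, huw⟩)
  exact ⟨r, hsemi, hsym, this⟩

theorem chain_of_tauStar {Γ : BPA C A} {β β'' : List C} (hS : Sb Γ β β'')
    (h : Γ.TauStar β β'') : RelChain (Γ.Step Γ.tau) (Sb Γ) β β β'' := by
  have key : ∀ x, Γ.TauStar x β'' → Γ.TauStar β x →
      RelChain (Γ.Step Γ.tau) (Sb Γ) β x β'' := by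
    intro x hx
    induction hx using ReflTransGen.head_induction_on with
    | refl => intro _; exact ReflTransGen.refl
    | @head c c₁ hs h' ih =>
      intro hβc
      have h1 : Γ.TauStar β c₁ := hβc.tail hs
      have : Sb Γ β c₁ := sb_stutter hS h1 h'
      exact ReflTransGen.head ⟨hs, this⟩ (ih h1)
  exact key β h ReflTransGen.refl

theorem sb_isBB (Γ : BPA C A) : Γ.IsBranchingBisim (Sb Γ) := by
  classical
  refine ⟨⟨sb_refl Γ, fun h => sb_symm h, fun h1 h2 => sb_trans h1 h2⟩, ?_⟩
  intro α β hαβ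
  constructor
  · intro a ha α' hs
    rcases semi_sb Γ α β hαβ a α' hs with ⟨hℓ, _⟩ | ⟨β'', β', a1, a2, a3, a4⟩
    · exact absurd hℓ ha
    · have hββ'' : Sb Γ β β'' := sb_trans (sb_symm hαβ) a3
      exact ⟨β'', β', chain_of_tauStar hββ'' a1, a2, a4⟩
  · intro α' hs hne
    rcases semi_sb Γ α β hαβ Γ.tau α' hs with ⟨_, y'', a1, a2, a3⟩ |
        ⟨β'', β', a1, a2, a3, a4⟩
    · exact absurd (sb_trans a2 (sb_symm a3)) hne
    · have hββ'' : Sb Γ β β'' := sb_trans (sb_symm hαβ) a3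
      refine ⟨β'', β', chain_of_tauStar hββ'' a1, a2, ?_, a4⟩
      intro hcon
      exact hne (sb_trans a3 (sb_trans hcon (sb_symm a4)))

theorem bisim_iff {Γ : BPA C A} {x y : List C} :
    Γ.Bisim x y ↔ Sb Γ x y := by
  constructor
  · rintro ⟨r, ⟨heq, htr⟩, hxy⟩
    refine ⟨r, ?_, fun a b h => heq.symm h, hxy⟩
    intro p q hpq ℓ p' hs
    classical
    by_cases hℓ : ℓ = Γ.tau
    · subst hℓ
      by_cases hin : r p p'
      · exact Or.inl ⟨rfl, q, ReflTransGen.refl, hpq,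
          heq.trans (heq.symm hin) hpq⟩
      · obtain ⟨q'', q', hc, hstep, _, hres⟩ := (htr p q hpq).2 p' hs hin
        have h1 : Γ.TauStar q q'' := ReflTransGen.mono (fun _ _ h => h.1) _ _ hc
        have h2 : r q q'' := by
          rcases (ReflTransGen.cases_tail hc) with h | ⟨c, _, hlast⟩
          · exact h ▸ heq.refl q
          · exact hlast.2
        exact Or.inr ⟨q'', q', h1, hstep, heq.trans hpq h2, hres⟩
    · obtain ⟨q'', q', hc, hstep, hres⟩ := (htr p q hpq).1 ℓ hℓ p' hs
      have h1 : Γ.TauStar q q'' := ReflTransGen.mono (fun _ _ h => h.1) _ _ hc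
      have h2 : r q q'' := by
        rcases (ReflTransGen.cases_tail hc) with h | ⟨c, _, hlast⟩
        · exact h ▸ heq.refl q
        · exact hlast.2
      exact Or.inr ⟨q'', q', h1, hstep, heq.trans hpq h2, hres⟩
  · intro h
    exact ⟨Sb Γ, sb_isBB Γ, h⟩

end BPAProof
namespace BPAProof
open BPA Relation
variable {C A : Type}

/-- `VN p n`: `p` can reach `ε` along a path with `n` visible actions. -/
inductive VN (Γ : BPA C A) : List C → ℕ → Prop
  | nil : VN Γ [] 0
  | tau {p q n} : Γ.Step Γ.tau p q → VN Γ q n → VN Γ p n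
  | vis {p q n a} : a ≠ Γ.tau → Γ.Step a p q → VN Γ q n → VN Γ p (n + 1)

theorem vn_of_tauStar_nil {Γ : BPA C A} {p : List C} (h : Γ.TauStar p []) :
    VN Γ p 0 := by
  induction h using ReflTransGen.head_induction_on with
  | refl => exact VN.nil
  | head hs _ ih => exact VN.tau hs ih

theorem tauStar_nil_of_vn0 {Γ : BPA C A} {p : List C} (h : VN Γ p 0) :
    Γ.TauStar p [] := by
  generalize hn : 0 = n at h
  induction h with
  | nil => exact ReflTransGen.refl
  | tau hs _ ih => exact ReflTransGen.head hs (ih hn)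
  | vis _ _ _ _ => omega

theorem vn_prepend {Γ : BPA C A} {p q : List C} {n : ℕ}
    (h : Γ.TauStar p q) (hq : VN Γ q n) : VN Γ p n := by
  induction h using ReflTransGen.head_induction_on with
  | refl => exact hq
  | head hs _ ih => exact VN.tau hs ih

/-- `ε ≃ z` forces silent termination of `z`. -/
theorem eps_sb {Γ : BPA C A} (hn : Γ.Normed) {z : List C}
    (h : Sb Γ z []) : Γ.TauStar z [] := by
  have hz : ReflTransGen Γ.AnyStep z [] := by
    clear h
    induction z with
    | nil => exact ReflTransGen.refl
    | cons X t ih =>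
      have h1 : ReflTransGen Γ.AnyStep ([X] ++ t) ([] ++ t) := by
        refine ReflTransGen.lift (r := Γ.AnyStep) (fun p => p ++ t) ?_ _ _ (hn X)
        rintro p q ⟨ℓ, hs⟩; exact ⟨ℓ, step_append t hs⟩
      exact h1.trans ih
  induction hz using ReflTransGen.head_induction_on with
  | refl => exact ReflTransGen.refl
  | @head z z₁ hs _ ih =>
    obtain ⟨ℓ, hsℓ⟩ := hs
    rcases semi_sb Γ z [] h ℓ z₁ hsℓ with ⟨hℓ, y'', hy, _, h3⟩ |
        ⟨y'', y', hy, hstep, _, _⟩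
    · have : y'' = [] := tauStar_from_nil hy
      subst this
      subst hℓ
      exact ReflTransGen.head hsℓ (ih h3)
    · have : y'' = [] := tauStar_from_nil hy
      subst this
      exact absurd hstep (no_step_nil _ _ _)

/-- `VN` transfer along `Sb`. -/
theorem vn_transfer {Γ : BPA C A} (hn : Γ.Normed) {x : List C} {n : ℕ}
    (h : VN Γ x n) : ∀ y, Sb Γ x y → ∃ m ≤ n, VN Γ y m := by
  induction h with
  | nil =>
    intro y hy
    exact ⟨0, le_refl 0, vn_of_tauStar_nil (eps_sb hn (sb_symm hy))⟩
  | @tau p q _ hs _ ih =>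
    intro y hy
    rcases semi_sb Γ p y hy Γ.tau q hs with ⟨_, y'', h1, _, h3⟩ |
        ⟨y'', y', h1, h2, _, h4⟩
    · obtain ⟨m, hm, hvn⟩ := ih y'' h3
      exact ⟨m, hm, vn_prepend h1 hvn⟩
    · obtain ⟨m, hm, hvn⟩ := ih y' h4
      exact ⟨m, hm, vn_prepend h1 (VN.tau h2 hvn)⟩
  | @vis p q _ a ha hs _ ih =>
    intro y hy
    rcases semi_sb Γ p y hy a q hs with ⟨hℓ, _⟩ |
        ⟨y'', y', h1, h2, _, h4⟩
    · exact absurd hℓ ha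
    · obtain ⟨m, hm, hvn⟩ := ih y' h4
      exact ⟨m + 1, by omega, vn_prepend h1 (VN.vis ha h2 hvn)⟩

theorem vn_split {Γ : BPA C A} {p : List C} {n : ℕ} (h : VN Γ p n) :
    ∀ a γ : List C, p = a ++ γ → ∃ k l, k + l = n ∧ VN Γ a k ∧ VN Γ γ l := by
  induction h with
  | nil =>
    rintro a γ hp
    obtain ⟨rfl, rfl⟩ := List.append_eq_nil_iff.mp hp.symm
    exact ⟨0, 0, rfl, VN.nil, VN.nil⟩
  | @tau p q n hs hq ih =>
    rintro a γ rfl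
    rcases eq_or_ne a [] with rfl | ha
    · exact ⟨0, n, by omega, VN.nil, VN.tau (by simpa using hs) hq⟩
    · obtain ⟨a₀, hstep, rfl⟩ := step_decomp hs ha
      obtain ⟨k, l, hkl, h1, h2⟩ := ih a₀ γ rfl
      exact ⟨k, l, hkl, VN.tau hstep h1, h2⟩
  | @vis p q n b hb hs hq ih =>
    rintro a γ rfl
    rcases eq_or_ne a [] with rfl | ha
    · exact ⟨0, n + 1, by omega, VN.nil, VN.vis hb (by simpa using hs) hq⟩
    · obtain ⟨a₀, hstep, rfl⟩ := step_decomp hs ha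
      obtain ⟨k, l, hkl, h1, h2⟩ := ih a₀ γ rfl
      exact ⟨k + 1, l, by omega, VN.vis hb hstep h1, h2⟩

theorem normedProc_all {Γ : BPA C A} (hn : Γ.Normed) (p : List C) :
    ∃ n, VN Γ p n := by
  have hz : ReflTransGen Γ.AnyStep p [] := by
    induction p with
    | nil => exact ReflTransGen.refl
    | cons X t ih =>
      have h1 : ReflTransGen Γ.AnyStep ([X] ++ t) ([] ++ t) := by
        refine ReflTransGen.lift (r := Γ.AnyStep) (fun p => p ++ t) ?_ _ _ (hn X)
        rintro p q ⟨ℓ, hs⟩; exact ⟨ℓ, step_append t hs⟩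
      exact h1.trans ih
  clear hn
  induction hz using ReflTransGen.head_induction_on with
  | refl => exact ⟨0, VN.nil⟩
  | @head z z₁ hs _ ih =>
    classical
    obtain ⟨n, hvn⟩ := ih
    obtain ⟨ℓ, hsℓ⟩ := hs
    by_cases hℓ : ℓ = Γ.tau
    · exact ⟨n, VN.tau (hℓ ▸ hsℓ) hvn⟩
    · exact ⟨n + 1, VN.vis hℓ hsℓ hvn⟩

/-- A string redundant over `γ` terminates silently. -/
theorem ground_of_red {Γ : BPA C A} (hn : Γ.Normed) {a γ : List C}
    (h : Sb Γ (a ++ γ) γ) : Γ.TauStar a [] := by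
  classical
  have hex : ∃ n, VN Γ γ n := normedProc_all hn γ
  have hdec : DecidablePred fun n => VN Γ γ n := fun _ => Classical.dec _
  set n₀ := Nat.find hex with hn₀
  obtain ⟨m, hm, hvn⟩ := vn_transfer hn (Nat.find_spec hex) (a ++ γ) (sb_symm h)
  obtain ⟨k, l, hkl, h1, h2⟩ := vn_split hvn a γ rfl
  have hl : n₀ ≤ l := Nat.find_le h2
  have hk : k = 0 := by omega
  subst hk
  exact tauStar_nil_of_vn0 h1

end BPAProof
namespace BPAProof
open BPA Relation
variable {C A : Type}

/-- Prefix congruence: `δ ≃ η → pδ ≃ pη`. -/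
theorem sb_prefix {Γ : BPA C A} {d e : List C} (p : List C)
    (h : Sb Γ d e) : Sb Γ (p ++ d) (p ++ e) := by
  set r : List C → List C → Prop := fun x y =>
    ∃ q d' e', x = q ++ d' ∧ y = q ++ e' ∧ Sb Γ d' e' with hr
  have hsub : ∀ x y, Sb Γ x y → r x y := fun x y h =>
    ⟨[], x, y, rfl, rfl, h⟩
  refine ⟨r, ?_, ?_, ⟨p, d, e, rfl, rfl, h⟩⟩
  · rintro x y ⟨q, d', e', rfl, rfl, hde⟩ ℓ x' hs
    rcases eq_or_ne q [] with rfl | hq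
    · simp only [List.nil_append] at hs ⊢
      rcases semi_sb Γ d' e' hde ℓ x' hs with ⟨hℓ, y'', a1, a2, a3⟩ |
          ⟨y'', y', a1, a2, a3, a4⟩
      · exact Or.inl ⟨hℓ, y'', a1, hsub _ _ a2, hsub _ _ a3⟩
      · exact Or.inr ⟨y'', y', a1, a2, hsub _ _ a3, hsub _ _ a4⟩
    · obtain ⟨q₀, hstep, rfl⟩ := step_decomp hs hq
      exact Or.inr ⟨q ++ e', q₀ ++ e', ReflTransGen.refl, step_append e' hstep,
        ⟨q, d', e', rfl, rfl, hde⟩, ⟨q₀, d', e', rfl, rfl, hde⟩⟩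
  · rintro x y ⟨q, d', e', rfl, rfl, hde⟩
    exact ⟨q, e', d', rfl, rfl, sb_symm hde⟩

/-- Tail lemma: if `(X :: a')γ ≃ γ` then `a'γ ≃ γ`. -/
theorem sb_tail {Γ : BPA C A} (hn : Γ.Normed) {X : C} {a' γ : List C}
    (h : Sb Γ ((X :: a') ++ γ) γ) : Sb Γ (a' ++ γ) γ := by
  have hg : Γ.TauStar (X :: a') [] := ground_of_red hn h
  obtain ⟨hgX, hga'⟩ := tauStar_split (a := [X]) (γ := a') hg rfl
  -- path1 : (X :: a')γ ⟹ a'γ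
  have hpath1 : Γ.TauStar ((X :: a') ++ γ) (a' ++ γ) := by
    have := tauStar_append (a' ++ γ) hgX
    simpa using this
  -- path2 : a'γ ⟹ γ
  have hpath2 : Γ.TauStar (a' ++ γ) γ := by
    have := tauStar_append γ hga'
    simpa using this
  -- track path1 on the γ side
  obtain ⟨g, hg1, hg2⟩ := semi_ws (semi_sb Γ) h hpath1
  -- hg1 : γ ⟹ g, hg2 : Sb (a'γ) g
  obtain ⟨g₂, hg3, hg4⟩ := semi_ws (semi_sb Γ) hg2 hpath2
  -- hg3 : g ⟹ g₂, hg4 : Sb γ g₂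
  have hst : Sb Γ γ g := sb_stutter hg4 hg1 hg3
  exact sb_trans hg2 (sb_symm hst)

/-- Redundancy transfer (Lemma A). -/
theorem red_transfer {Γ : BPA C A} (hn : Γ.Normed) {γ₁ γ₂ : List C}
    (h : ∀ X : C, Sb Γ (X :: γ₁) γ₁ ↔ Sb Γ (X :: γ₂) γ₂) :
    ∀ a : List C, Sb Γ (a ++ γ₁) γ₁ → Sb Γ (a ++ γ₂) γ₂ := by
  intro a
  induction a with
  | nil => intro _; exact sb_refl Γ γ₂
  | cons X a' ih =>
    intro ha
    have h1 : Sb Γ (a' ++ γ₁) γ₁ := sb_tail hn ha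
    have h2 : Sb Γ ((X :: a') ++ γ₁) (X :: γ₁) := by
      have := sb_prefix [X] h1
      simpa using this
    have h3 : Sb Γ (X :: γ₁) γ₁ := sb_trans (sb_symm h2) ha
    have h4 : Sb Γ (X :: γ₂) γ₂ := (h X).mp h3
    have h5 : Sb Γ (a' ++ γ₂) γ₂ := ih h1
    have h6 : Sb Γ ((X :: a') ++ γ₂) (X :: γ₂) := by
      have := sb_prefix [X] h5
      simpa using this
    exact sb_trans h6 h4

end BPAProof
namespace BPAProof
open BPA Relation
variable {C A : Type}

/-- Lifting a response chain from the `γ₁` world to the `γ₂` world. -/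
theorem chain_lift {Γ : BPA C A} {b γ₁ γ₂ c : List C}
    (hstr : ¬ Sb Γ (b ++ γ₁) γ₁)
    (hc : RelChain (Γ.Step Γ.tau) (Sb Γ) (b ++ γ₁) (b ++ γ₁) c) :
    ∃ β₀, β₀ ≠ [] ∧ c = β₀ ++ γ₁ ∧ Γ.TauStar (b ++ γ₂) (β₀ ++ γ₂) ∧
      Sb Γ (b ++ γ₁) c := by
  have hbne : b ≠ [] := by
    rintro rfl; exact hstr (by simpa using sb_refl Γ γ₁)
  induction hc with
  | refl => exact ⟨b, hbne, rfl, ReflTransGen.refl, sb_refl Γ _⟩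
  | @tail c d hc hlink ih =>
    obtain ⟨β₀, hβ₀ne, rfl, hlift, _⟩ := ih
    obtain ⟨hstep, hSb⟩ := hlink
    obtain ⟨β₁, hstep0, rfl⟩ := step_decomp hstep hβ₀ne
    have hβ₁ne : β₁ ≠ [] := by
      rintro rfl
      exact hstr (by simpa using hSb)
    exact ⟨β₁, hβ₁ne, rfl, hlift.tail (step_append γ₂ hstep0), hSb⟩

/-- Main transfer: if the redunant constants agree then bisimilarity with
suffix `γ₁` transfers to suffix `γ₂`. -/
theorem main_forward {Γ : BPA C A} (hn : Γ.Normed) (γ₁ γ₂ : List C)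
    (h : ∀ X : C, Sb Γ (X :: γ₁) γ₁ ↔ Sb Γ (X :: γ₂) γ₂)
    (α β : List C) (hb : Sb Γ (α ++ γ₁) (β ++ γ₁)) :
    Sb Γ (α ++ γ₂) (β ++ γ₂) := by
  classical
  by_cases hred : Sb Γ (α ++ γ₁) γ₁
  · have hredβ : Sb Γ (β ++ γ₁) γ₁ := sb_trans (sb_symm hb) hred
    exact sb_trans (red_transfer hn h α hred)
      (sb_symm (red_transfer hn h β hredβ))
  set Q : List C → List C → Prop := fun x y =>
    ∃ a b, x = a ++ γ₂ ∧ y = b ++ γ₂ ∧ Sb Γ (a ++ γ₁) (b ++ γ₁) ∧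
      ¬ Sb Γ (a ++ γ₁) γ₁ with hQ
  set q : List C → List C → Prop := fun x y => Sb Γ x y ∨ Q x y with hq
  have hsym : ∀ x y, q x y → q y x := by
    rintro x y (hS | ⟨a, b, rfl, rfl, hab, hstrict⟩)
    · exact Or.inl (sb_symm hS)
    · exact Or.inr ⟨b, a, rfl, rfl, sb_symm hab,
        fun hc => hstrict (sb_trans hab hc)⟩
  have hsemi : Semi Γ q := by
    rintro x y (hS | ⟨a, b, rfl, rfl, hab, hstrict⟩) ℓ x' hs
    · rcases semi_sb Γ x y hS ℓ x' hs with ⟨hℓ, y'', a1, a2, a3⟩ |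
          ⟨y'', y', a1, a2, a3, a4⟩
      · exact Or.inl ⟨hℓ, y'', a1, Or.inl a2, Or.inl a3⟩
      · exact Or.inr ⟨y'', y', a1, a2, Or.inl a3, Or.inl a4⟩
    · have hb_strict : ¬ Sb Γ (b ++ γ₁) γ₁ :=
        fun hc => hstrict (sb_trans hab hc)
      have ha_ne : a ≠ [] := by
        rintro rfl; exact hstrict (by simpa using sb_refl Γ γ₁)
      obtain ⟨a₀, hstepa, rfl⟩ := step_decomp hs ha_ne
      have hstep1 : Γ.Step ℓ (a ++ γ₁) (a₀ ++ γ₁) := step_append γ₁ hstepa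
      obtain ⟨hequiv, htr⟩ := sb_isBB Γ
      obtain ⟨cvis, ctau⟩ := htr _ _ hab
      have hfinal : ∀ β₁ : List C, Sb Γ (a₀ ++ γ₁) (β₁ ++ γ₁) →
          q (a₀ ++ γ₂) (β₁ ++ γ₂) := by
        intro β₁ hres
        by_cases hr0 : Sb Γ (a₀ ++ γ₁) γ₁
        · exact Or.inl (sb_trans (red_transfer hn h a₀ hr0)
            (sb_symm (red_transfer hn h β₁ (sb_trans (sb_symm hres) hr0))))
        · exact Or.inr ⟨a₀, β₁, rfl, rfl, hres, hr0⟩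
      by_cases hℓ : ℓ = Γ.tau
      · subst hℓ
        by_cases hin : Sb Γ (a ++ γ₁) (a₀ ++ γ₁)
        · refine Or.inl ⟨rfl, b ++ γ₂, ReflTransGen.refl,
            Or.inr ⟨a, b, rfl, rfl, hab, hstrict⟩,
            Or.inr ⟨a₀, b, rfl, rfl, sb_trans (sb_symm hin) hab,
              fun hc => hstrict (sb_trans hin hc)⟩⟩
        · obtain ⟨β'', β', hchain, hstepb, _, hres⟩ := ctau _ hstep1 hin
          obtain ⟨β₀, hβ₀ne, rfl, hlift, hSb⟩ := chain_lift hb_strict hchain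
          obtain ⟨β₁, hstep0, rfl⟩ := step_decomp hstepb hβ₀ne
          exact Or.inr ⟨β₀ ++ γ₂, β₁ ++ γ₂, hlift, step_append γ₂ hstep0,
            Or.inr ⟨a, β₀, rfl, rfl, sb_trans hab hSb, hstrict⟩,
            hfinal β₁ hres⟩
      · obtain ⟨β'', β', hchain, hstepb, hres⟩ := cvis ℓ hℓ _ hstep1
        obtain ⟨β₀, hβ₀ne, rfl, hlift, hSb⟩ := chain_lift hb_strict hchain
        obtain ⟨β₁, hstep0, rfl⟩ := step_decomp hstepb hβ₀ne
        exact Or.inr ⟨β₀ ++ γ₂, β₁ ++ γ₂, hlift, step_append γ₂ hstep0,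
          Or.inr ⟨a, β₀, rfl, rfl, sb_trans hab hSb, hstrict⟩,
          hfinal β₁ hres⟩
  exact ⟨q, hsemi, hsym, Or.inr ⟨α, β, rfl, rfl, hb, hred⟩⟩

end BPAProof
/-- If `Rd(γ₁) = Rd(γ₂)` then `αγ₁ ≃ βγ₁ ↔ αγ₂ ≃ βγ₂`. -/
theorem redundant_set_characterizes_bisimilarity {C A : Type} (Γ : BPA C A)
    (hΓ : Γ.Normed) (γ₁ γ₂ : List C)
    (h : {X : C | Γ.Bisim (X :: γ₁) γ₁} = {X : C | Γ.Bisim (X :: γ₂) γ₂})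
    (α β : List C) :
    Γ.Bisim (α ++ γ₁) (β ++ γ₁) ↔ Γ.Bisim (α ++ γ₂) (β ++ γ₂) := by
  have h' : ∀ X : C, BPAProof.Sb Γ (X :: γ₁) γ₁ ↔ BPAProof.Sb Γ (X :: γ₂) γ₂ := by
    intro X
    have := Set.ext_iff.mp h X
    simpa only [Set.mem_setOf_eq, BPAProof.bisim_iff] using this
  constructor
  · intro hb
    exact BPAProof.bisim_iff.mpr (BPAProof.main_forward hΓ γ₁ γ₂ h' α β
      (BPAProof.bisim_iff.mp hb))
  · intro hb
    exact BPAProof.bisim_iff.mpr (BPAProof.main_forward hΓ γ₂ γ₁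
      (fun X => (h' X).symm) α β (BPAProof.bisim_iff.mp hb))
end

section
/- Let Γ = (C, A, Δ) be a normed BPA system and R ⊆ C_G. For every process α: α ⟹ ε if and only if α_R ⟹_R ε. -/
open Relation

section Aux

variable {C A : Type}

lemma step_append {Γ : BPA C A} {ℓ : A} {p q : List C} (h : Γ.Step ℓ p q) (r : List C) :
    Γ.Step ℓ (p ++ r) (q ++ r) := by
  obtain ⟨X, γ, β, hm, hp, hq⟩ := h
  exact ⟨X, γ, β ++ r, hm, by simp [hp], by simp [hq]⟩

lemma tauStar_append {Γ : BPA C A} {p q : List C} (h : Γ.TauStar p q) (r : List C) :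
    Γ.TauStar (p ++ r) (q ++ r) := by
  induction h with
  | refl => exact ReflTransGen.refl
  | tail _ hs ih => exact ih.tail (step_append hs r)

lemma ground_list {Γ : BPA C A} {s : List C} (h : ∀ X ∈ s, Γ.TauStar [X] []) :
    Γ.TauStar s [] := by
  induction s with
  | nil => exact ReflTransGen.refl
  | cons X t ih =>
      have h1 : Γ.TauStar ([X] ++ t) ([] ++ t) :=
        tauStar_append (h X (by simp)) t
      simpa [BPA.TauStar] using h1.trans (ih fun Y hY => h Y (by simp [hY]))

lemma cancel_suffix {Γ : BPA C A} {m : List C} (h : Γ.TauStar m []) :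
    ∀ p s : List C, m = p ++ s → Γ.TauStar p [] := by
  induction h using ReflTransGen.head_induction_on with
  | refl =>
      intro p s hps
      have : p = [] := by
        cases p with
        | nil => rfl
        | cons a b => simp at hps
      simp only [this]
      exact ReflTransGen.refl
  | head hs _ ih =>
      intro p s hps
      rename_i x y _
      cases p with
      | nil => exact ReflTransGen.refl
      | cons X p' =>
          obtain ⟨Z, γ, β, hm, hp, hq⟩ := hs
          have hZ : X = Z ∧ p' ++ s = β := by
            rw [hps] at hp; simpa using hp
          have hy : y = (γ ++ p') ++ s := by rw [hq, ← hZ.2]; simp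
          have h1 : Γ.TauStar (γ ++ p') [] := ih (γ ++ p') s hy
          exact ReflTransGen.head ⟨Z, γ, p', hm, by rw [← hZ.1], rfl⟩ h1

lemma nf_decomp (R : Set C) (a : List C) :
    ∃ s, a = BPA.nf R a ++ s ∧ ∀ X ∈ s, X ∈ R := by
  classical
  refine ⟨(a.reverse.takeWhile fun X => decide (X ∈ R)).reverse, ?_, ?_⟩
  · rw [BPA.nf]
    conv_rhs => rw [← List.reverse_append, List.takeWhile_append_dropWhile,
      List.reverse_reverse]
  · intro X hX
    have := List.mem_takeWhile_imp (List.mem_reverse.mp hX)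
    simpa using this

lemma nf_nil (R : Set C) : BPA.nf R ([] : List C) = [] := by simp [BPA.nf]

/-- Groundness is robust under relativization: `α ⟹ ε` iff `α_R ⟹_R ε`. -/
theorem ground_preserved {C A : Type} (Γ : BPA C A) (hΓ : Γ.Normed)
    (R : Set C) (hR : R ⊆ Γ.GroundC) (α : List C) :
    Γ.TauStar α [] ↔ Γ.TauStarR R (BPA.nf R α) [] := by
  have hgr : ∀ s : List C, (∀ X ∈ s, X ∈ R) → Γ.TauStar s [] := by
    intro s hs
    exact ground_list fun X hX => hR (hs X hX)
  constructor
  · intro h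
    have key : ∀ m : List C, Γ.TauStar m [] → Γ.TauStarR R (BPA.nf R m) [] := by
      intro m hm
      induction hm using ReflTransGen.head_induction_on with
      | refl => rw [nf_nil]; exact ReflTransGen.refl
      | head hs _ ih =>
          rename_i x y _
          exact ReflTransGen.head ⟨x, y, rfl, rfl, hs⟩ ih
    exact key α h
  · intro h
    have key : ∀ ζ : List C, Γ.TauStarR R ζ [] →
        ∀ a : List C, BPA.nf R a = ζ → Γ.TauStar a [] := by
      intro ζ hζ
      induction hζ using ReflTransGen.head_induction_on with
      | refl =>
          intro a ha
          obtain ⟨s, hdec, hmem⟩ := nf_decomp R a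
          rw [ha] at hdec
          simp only [List.nil_append] at hdec
          rw [hdec]; exact hgr s hmem
      | head hs _ ih =>
          intro a ha
          obtain ⟨b, c, hb, hc, hstep⟩ := hs
          have hcg : Γ.TauStar c [] := by
            obtain ⟨s, hdec, hmem⟩ := nf_decomp R c
            exact ih c hc.symm
          have hbg : Γ.TauStar b [] := ReflTransGen.head hstep hcg
          -- from b ⟹ ε and nf b = ζ, deduce ζ ⟹ ε
          obtain ⟨sb, hdecb, _⟩ := nf_decomp R b
          have hζg : Γ.TauStar (BPA.nf R b) [] := cancel_suffix hbg _ sb hdecb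
          -- a = nf a ++ sa with nf a = nf b
          obtain ⟨sa, hdeca, hmema⟩ := nf_decomp R a
          rw [ha, hb] at hdeca
          rw [hdeca]
          have h1 : Γ.TauStar (BPA.nf R b ++ sa) ([] ++ sa) := tauStar_append hζg sa
          simp only [List.nil_append] at h1
          exact h1.trans (hgr sa hmema)
    exact key (BPA.nf R α) h α rfl

end Aux
end

section
/- Let Γ = (C, A, Δ) be a normed BPA system, R ⊆ C_G, and ≍ an equivalence relation on processes containing =_R. Then ≍ is an R-bisimulation if and only if whenever α ≍ β the following hold: (1) if α_R ⟹_R ε then β_R ⟹_R ε; (2) if α_R —τ→_R η with ¬(α ≍ η), then there exist η'' and η' such that β_R = ζ0 —τ→_R ··· —τ→_R ζk = η'' with ζi ≍ β for all i, η'' —τ→_R η', ¬(η'' ≍ η'), and η ≍ η'; (3) for every a ≠ τ, if α_R —a→_R η then there exist η'' and η' such that β_R = ζ0 —τ→_R ··· —τ→_R ζk = η'' with ζi ≍ β for all i, η'' —a→_R η', and η ≍ η'. -/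
open Relation

namespace BPA

variable {C A : Type} {Γ : BPA C A} {R : Set C}

open Classical in
lemma nf_spec (R : Set C) (α : List C) :
    ∃ s, α = nf R α ++ s ∧ ∀ X ∈ s, X ∈ R := by
  classical
  refine ⟨(α.reverse.takeWhile fun X => decide (X ∈ R)).reverse, ?_, ?_⟩
  · conv_lhs => rw [← α.reverse_reverse,
      ← List.takeWhile_append_dropWhile (p := fun X => decide (X ∈ R)) (l := α.reverse)]
    rw [List.reverse_append]
    rfl
  · intro X hX
    rw [List.mem_reverse] at hX
    simpa using List.mem_takeWhile_imp hX

lemma nf_nil (R : Set C) : nf R ([] : List C) = [] := by simp [nf]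

lemma rEq_nf (R : Set C) (α : List C) : REq R α (nf R α) := by
  obtain ⟨s, h1, h2⟩ := nf_spec R α
  exact ⟨nf R α, s, [], h1, by simp, h2, by simp⟩

lemma rEq_of_nf_eq {α β : List C} (h : nf R α = nf R β) : REq R α β := by
  obtain ⟨s1, h1, h1'⟩ := nf_spec R α
  obtain ⟨s2, h2, h2'⟩ := nf_spec R β
  exact ⟨nf R α, s1, s2, h1, by rw [h]; exact h2, h1', h2'⟩

lemma Step.stepR {ℓ x y} (h : Γ.Step ℓ x y) : Γ.StepR R ℓ (nf R x) (nf R y) :=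
  ⟨x, y, rfl, rfl, h⟩

lemma step_append_s4 {ℓ p q} (t : List C) (h : Γ.Step ℓ p q) : Γ.Step ℓ (p ++ t) (q ++ t) := by
  obtain ⟨X, γ, β, hr, hp, hq⟩ := h
  exact ⟨X, γ, β ++ t, hr, by simp [hp], by simp [hq]⟩

lemma tauStar_append {p q} (t : List C) (h : Γ.TauStar p q) : Γ.TauStar (p ++ t) (q ++ t) :=
  Relation.ReflTransGen.lift (· ++ t) (fun _ _ h => step_append_s4 t h) _ _ h

lemma ground_list (hR : R ⊆ Γ.GroundC) : ∀ s : List C, (∀ X ∈ s, X ∈ R) → Γ.TauStar s []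
  | [], _ => Relation.ReflTransGen.refl
  | X :: s, h => by
    have h1 : Γ.TauStar [X] [] := hR (h X (by simp))
    have h2 := tauStar_append s h1
    simp only [List.nil_append, List.cons_append, List.singleton_append] at h2
    exact h2.trans (ground_list hR s fun Y hY => h Y (by simp [hY]))

lemma tauStar_nil_dropSuffix : ∀ {p}, Γ.TauStar p [] → ∀ ζ s, p = ζ ++ s → Γ.TauStar ζ [] := by
  intro p hp
  induction hp using Relation.ReflTransGen.head_induction_on with
  | refl =>
    intro ζ s h
    obtain ⟨h1, -⟩ := List.append_eq_nil_iff.mp h.symm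
    rw [h1]
    exact Relation.ReflTransGen.refl
  | head h' _ ih =>
    intro ζ s h
    match ζ with
    | [] => exact Relation.ReflTransGen.refl
    | X :: ζ' =>
      obtain ⟨X', γ, β, hrule, hp', hq⟩ := h'
      rw [h] at hp'
      simp only [List.cons_append, List.cons.injEq] at hp'
      obtain ⟨rfl, rfl⟩ := hp'
      have ihc := ih (γ ++ ζ') s (by rw [hq, List.append_assoc])
      exact Relation.ReflTransGen.head ⟨X, γ, ζ', hrule, rfl, rfl⟩ ihc

lemma tauStar_nil_of_nf (hR : R ⊆ Γ.GroundC) {α : List C} (h : Γ.TauStar (nf R α) []) :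
    Γ.TauStar α [] := by
  obtain ⟨s, hs, hsR⟩ := nf_spec R α
  rw [hs]
  have h2 := tauStar_append s h
  simp only [List.nil_append] at h2
  exact h2.trans (ground_list hR s hsR)

lemma tauStarR_ground (hR : R ⊆ Γ.GroundC) : ∀ {ζ}, Γ.TauStarR R ζ [] → Γ.TauStar ζ [] := by
  intro ζ h
  induction h using Relation.ReflTransGen.head_induction_on with
  | refl => exact Relation.ReflTransGen.refl
  | head h' _ ih =>
    obtain ⟨x, y, hx, hy, hstep⟩ := h'
    have hy' : Γ.TauStar y [] := tauStar_nil_of_nf hR (hy ▸ ih)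
    have hx' : Γ.TauStar x [] := Relation.ReflTransGen.head hstep hy'
    obtain ⟨s, hs, -⟩ := nf_spec R x
    exact hx ▸ tauStar_nil_dropSuffix hx' (nf R x) s hs

lemma tauStar_to_tauStarR {β : List C} (h : Γ.TauStar β []) :
    Γ.TauStarR R (nf R β) [] := by
  have h2 : ReflTransGen (Γ.StepR R Γ.tau) (nf R β) (nf R []) := Relation.ReflTransGen.lift (nf R)
    (fun a b hab => (Step.stepR hab : Γ.StepR R Γ.tau (nf R a) (nf R b))) _ _ h
  rwa [nf_nil] at h2

end BPA

/-- Characterization of `R`-bisimulations as bisimulations on `R`-normal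
forms under `R`-transitions. -/
theorem RBisim_characterization {C A : Type} (Γ : BPA C A) (hΓ : Γ.Normed)
    (R : Set C) (hR : R ⊆ Γ.GroundC) (r : List C → List C → Prop)
    (hEquiv : Equivalence r) (hsub : ∀ α β, BPA.REq R α β → r α β) :
    Γ.IsRBisim R r ↔ ∀ α β, r α β →
      ((Γ.TauStarR R (BPA.nf R α) [] → Γ.TauStarR R (BPA.nf R β) []) ∧
       (∀ η, Γ.StepR R Γ.tau (BPA.nf R α) η → ¬ r α η →
          ∃ η'' η', BPA.RelChain (Γ.StepR R Γ.tau) r β (BPA.nf R β) η'' ∧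
            Γ.StepR R Γ.tau η'' η' ∧ ¬ r η'' η' ∧ r η η') ∧
       (∀ a, a ≠ Γ.tau → ∀ η, Γ.StepR R a (BPA.nf R α) η →
          ∃ η'' η', BPA.RelChain (Γ.StepR R Γ.tau) r β (BPA.nf R β) η'' ∧
            Γ.StepR R a η'' η' ∧ r η η')) := by
  constructor
  · rintro ⟨-, -, hmain⟩ α β hrab
    refine ⟨?_, ?_, ?_⟩
    · intro h
      have h2 : Γ.TauStar α [] := BPA.tauStar_nil_of_nf hR (BPA.tauStarR_ground hR h)
      exact BPA.tauStar_to_tauStarR ((hmain α β hrab).1 h2)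
    · intro η hstep hne
      obtain ⟨x, y, hx, hy, hs⟩ := hstep
      have hrax : r α x := hsub _ _ (BPA.rEq_of_nf_eq hx)
      have hrxb : r x β := hEquiv.trans (hEquiv.symm hrax) hrab
      have hry : r y (BPA.nf R y) := hsub _ _ (BPA.rEq_nf R y)
      have hne' : ¬ r x y := fun hxy =>
        hne (hy ▸ hEquiv.trans (hEquiv.trans hrax hxy) hry)
      obtain ⟨β'', β', hchain, hstep', hne'', hr'⟩ := (hmain x β hrxb).2.1 y hs hne'
      exact ⟨β'', β', hchain, hstep', hne'',
        hy ▸ hEquiv.trans (hEquiv.symm hry) hr'⟩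
    · intro a ha η hstep
      obtain ⟨x, y, hx, hy, hs⟩ := hstep
      have hrax : r α x := hsub _ _ (BPA.rEq_of_nf_eq hx)
      have hrxb : r x β := hEquiv.trans (hEquiv.symm hrax) hrab
      have hry : r y (BPA.nf R y) := hsub _ _ (BPA.rEq_nf R y)
      obtain ⟨β'', β', hchain, hstep', hr'⟩ := (hmain x β hrxb).2.2 a ha y hs
      exact ⟨β'', β', hchain, hstep', hy ▸ hEquiv.trans (hEquiv.symm hry) hr'⟩
  · intro hchar
    refine ⟨hEquiv, hsub, fun α β hrab => ⟨?_, ?_, ?_⟩⟩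
    · intro h
      have h1 := BPA.tauStar_to_tauStarR (R := R) h
      have h2 := (hchar α β hrab).1 h1
      exact BPA.tauStar_nil_of_nf hR (BPA.tauStarR_ground hR h2)
    · intro α' hstep hne
      have hra' : r α' (BPA.nf R α') := hsub _ _ (BPA.rEq_nf R α')
      have hne' : ¬ r α (BPA.nf R α') := fun h =>
        hne (hEquiv.trans h (hEquiv.symm hra'))
      obtain ⟨η'', η', hchain, hst, hneη, hrη⟩ :=
        (hchar α β hrab).2.1 (BPA.nf R α') (BPA.Step.stepR hstep) hne'
      exact ⟨η'', η', hchain, hst, hneη, hEquiv.trans hra' hrη⟩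
    · intro a ha α' hstep
      obtain ⟨η'', η', hchain, hst, hrη⟩ :=
        (hchar α β hrab).2.2 a ha (BPA.nf R α') (BPA.Step.stepR hstep)
      exact ⟨η'', η', hchain, hst, hEquiv.trans (hsub _ _ (BPA.rEq_nf R α')) hrη⟩
end
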